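/- Let t ≥ 1 and N = 2^t, let r ≥ t and n ≥ 1, let E_q be a finite set of vectors in Fin n → ZMod 2, and let x₀, …, x_{r−1} : Fin n → ZMod 2. Let ι : (Fin n → ZMod 2) → (Fin n → ZMod N) be the componentwise map sending 0 to 0 and 1 to 1. Define E = { ι (q + ∑_i u i • x_i) : q ∈ E_q, u : Fin r → ZMod 2 } and E_t = { ι (q + ∑_i u i • x_i) : q ∈ E_q, u : Fin r → ZMod 2 with at most t nonzero entries }. Then Submodule.span (ZMod N) E = Submodule.span (ZMod N) E_t. -/

import Mathlib

/-- The componentwise lift `(Fin n → ZMod 2) → (Fin n → ZMod N)` sending `0 ↦ 0, 1 ↦ 1`. -/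
def liftZ (n N : ℕ) (w : Fin n → ZMod 2) : Fin n → ZMod N := fun i => ((w i).val : ZMod N)

lemma zmod2_val_add : ∀ c a : ZMod 2,
    ((c + a).val : ℤ) = c.val + a.val - 2 * c.val * a.val := by decide

lemma F_formula {ι : Type*} [DecidableEq ι] (a : ι → ZMod 2) (S : Finset ι) (c : ZMod 2) :
    ∑ T ∈ S.powerset, (-1 : ℤ) ^ (S.card - T.card) * ((c + ∑ i ∈ T, a i).val : ℤ)
    = if S = ∅ then (c.val : ℤ)
      else (1 - 2 * c.val) * (-2) ^ (S.card - 1) * ∏ i ∈ S, ((a i).val : ℤ) := by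
  induction S using Finset.induction_on generalizing c with
  | empty => simp
  | insert j S hi ih =>
    rw [Finset.sum_powerset_insert hi]
    have hrec : ∀ T ∈ S.powerset,
        (-1 : ℤ) ^ ((insert j S).card - T.card) * ((c + ∑ i ∈ T, a i).val : ℤ)
        = -((-1 : ℤ) ^ (S.card - T.card) * ((c + ∑ i ∈ T, a i).val : ℤ)) := by
      intro T hT
      have hle : T.card ≤ S.card := Finset.card_le_card (Finset.mem_powerset.mp hT)
      rw [Finset.card_insert_of_notMem hi, Nat.sub_add_comm hle, pow_succ]
      ring
    have hrec2 : ∀ T ∈ S.powerset,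
        (-1 : ℤ) ^ ((insert j S).card - (insert j T).card) * ((c + ∑ i ∈ insert j T, a i).val : ℤ)
        = (-1 : ℤ) ^ (S.card - T.card) * (((c + a j) + ∑ i ∈ T, a i).val : ℤ) := by
      intro T hT
      have hjT : j ∉ T := fun h => hi (Finset.mem_powerset.mp hT h)
      rw [Finset.card_insert_of_notMem hi, Finset.card_insert_of_notMem hjT,
        Nat.succ_sub_succ, Finset.sum_insert hjT]
      ring_nf
    rw [Finset.sum_congr rfl hrec, Finset.sum_congr rfl hrec2, Finset.sum_neg_distrib,
      ih c, ih (c + a j)]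
    by_cases hS : S = ∅
    · subst hS
      simp [-ZMod.natCast_val, Finset.insert_ne_empty, zmod2_val_add]
      ring
    · simp only [hS, if_neg, Finset.insert_ne_empty, if_false]
      rw [Finset.card_insert_of_notMem hi, Finset.prod_insert hi]
      have hcard : 1 ≤ S.card := Finset.card_pos.mpr (Finset.nonempty_iff_ne_empty.mpr hS)
      have : S.card + 1 - 1 = (S.card - 1) + 1 := by omega
      rw [this, pow_succ, zmod2_val_add]
      ring

lemma congr_zero (t n N : ℕ) (hN : N = 2 ^ t) {r : ℕ} (x : Fin r → Fin n → ZMod 2)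
    (q : Fin n → ZMod 2) (S : Finset (Fin r)) (hS : t + 1 ≤ S.card) :
    ∑ T ∈ S.powerset, ((-1 : ℤ) ^ (S.card - T.card)) • liftZ n N (q + ∑ i ∈ T, x i) = 0 := by
  funext j
  have hSne : S ≠ ∅ := by
    intro h; rw [h] at hS; simp at hS
  simp only [Finset.sum_apply, Pi.smul_apply, Pi.zero_apply, liftZ, Pi.add_apply]
  have : ∀ T ∈ S.powerset,
      ((-1 : ℤ) ^ (S.card - T.card)) • (((q j + ∑ i ∈ T, x i j).val : ZMod N))
      = ((((-1 : ℤ) ^ (S.card - T.card)) * (((q j + ∑ i ∈ T, x i j).val : ℤ)) : ℤ) : ZMod N) := by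
    intro T hT
    rw [zsmul_eq_mul]
    push_cast
    ring
  rw [Finset.sum_congr rfl this, ← Int.cast_sum, F_formula (fun i => x i j) S (q j),
    if_neg hSne]
  rw [ZMod.intCast_zmod_eq_zero_iff_dvd]
  have h2 : ((N : ℤ)) ∣ (-2) ^ (S.card - 1) := by
    rw [hN]
    push_cast
    have : (-2 : ℤ) ^ (S.card - 1) = (-1) ^ (S.card - 1) * 2 ^ (S.card - 1) := by
      rw [← neg_one_mul, mul_pow]
    rw [this]
    exact Dvd.dvd.mul_left (pow_dvd_pow 2 (by omega)) _
  exact Dvd.dvd.mul_right (Dvd.dvd.mul_left h2 _) _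


lemma zmod2_ne_zero : ∀ v : ZMod 2, v ≠ 0 → v = 1 := by decide

lemma sum_smul_filter {r n : ℕ} (u : Fin r → ZMod 2) (x : Fin r → Fin n → ZMod 2) :
    ∑ i, u i • x i = ∑ i ∈ Finset.univ.filter (fun i => u i ≠ 0), x i := by
  rw [Finset.sum_filter]
  apply Finset.sum_congr rfl
  intro i _
  by_cases h : u i = 0
  · simp [h]
  · rw [if_pos h, zmod2_ne_zero _ h, one_smul]

lemma sum_indicator_smul {r n : ℕ} (S : Finset (Fin r)) (x : Fin r → Fin n → ZMod 2) :
    ∑ i, (if i ∈ S then (1 : ZMod 2) else 0) • x i = ∑ i ∈ S, x i := by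
  simp [ite_smul, Finset.sum_ite_mem]

lemma mem_span_aux (t r n N : ℕ) (hN : N = 2 ^ t)
    (Eq : Finset (Fin n → ZMod 2)) (x : Fin r → Fin n → ZMod 2)
    (S : Finset (Fin r)) :
    ∀ q ∈ Eq, liftZ n N (q + ∑ i ∈ S, x i) ∈
      Submodule.span (ZMod N)
        {w : Fin n → ZMod N | ∃ q ∈ Eq, ∃ u : Fin r → ZMod 2,
          (Finset.univ.filter fun i => u i ≠ 0).card ≤ t ∧
          w = liftZ n N (q + ∑ i, u i • x i)} := by
  induction S using Finset.strongInduction with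
  | _ S ih =>
    intro q hq
    by_cases hcard : S.card ≤ t
    · -- directly a generator
      apply Submodule.subset_span
      refine ⟨q, hq, (fun i => if i ∈ S then 1 else 0), ?_, ?_⟩
      · have : (Finset.univ.filter fun i => (if i ∈ S then (1 : ZMod 2) else 0) ≠ 0) = S := by
          ext i
          by_cases h : i ∈ S <;> simp [h]
        rw [this]; exact hcard
      · rw [sum_indicator_smul]
    · -- use the congruence relation
      push_neg at hcard
      have hzero := congr_zero t n N hN x q S (by omega)
      have hSmem : S ∈ S.powerset := Finset.mem_powerset_self S
      rw [← Finset.sum_erase_add _ _ hSmem] at hzero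
      have hself : ((-1 : ℤ) ^ (S.card - S.card)) • liftZ n N (q + ∑ i ∈ S, x i)
          = liftZ n N (q + ∑ i ∈ S, x i) := by
        simp
      rw [hself] at hzero
      have : liftZ n N (q + ∑ i ∈ S, x i)
          = -∑ T ∈ S.powerset.erase S, ((-1 : ℤ) ^ (S.card - T.card)) • liftZ n N (q + ∑ i ∈ T, x i) := by
        linear_combination (norm := module) hzero
      rw [this]
      apply Submodule.neg_mem
      apply Submodule.sum_mem
      intro T hT
      have hTS : T ⊂ S := by
        rcases Finset.mem_erase.mp hT with ⟨hne, hpow⟩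
        exact Finset.ssubset_iff_subset_ne.mpr ⟨Finset.mem_powerset.mp hpow, hne⟩
      exact zsmul_mem (ih T hTS q hq) _

/-- **Span reduction to small orbit distance**: for `N = 2^t`, the `ZMod N`-span of the lifted
coset `E = { ι(q + ∑_i u_i x_i) }` equals the span of the subset `E_t` of elements of orbit
distance at most `t` from the core `E_q`. -/
theorem span_eq_span_orbit_dist_le (t r n N : ℕ) (ht : 1 ≤ t) (hN : N = 2 ^ t) (hr : t ≤ r)
    (hn : 1 ≤ n)
    (Eq : Finset (Fin n → ZMod 2)) (x : Fin r → Fin n → ZMod 2) :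
    Submodule.span (ZMod N)
        {w : Fin n → ZMod N | ∃ q ∈ Eq, ∃ u : Fin r → ZMod 2,
          w = liftZ n N (q + ∑ i, u i • x i)} =
      Submodule.span (ZMod N)
        {w : Fin n → ZMod N | ∃ q ∈ Eq, ∃ u : Fin r → ZMod 2,
          (Finset.univ.filter fun i => u i ≠ 0).card ≤ t ∧
          w = liftZ n N (q + ∑ i, u i • x i)} := by
  apply le_antisymm
  · rw [Submodule.span_le]
    rintro w ⟨q, hq, u, rfl⟩
    rw [sum_smul_filter]
    exact mem_span_aux t r n N hN Eq x _ q hq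
  · apply Submodule.span_mono
    rintro w ⟨q, hq, u, _, hw⟩
    exact ⟨q, hq, u, hw⟩
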